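/- (1-sum bound) Let V₁ and V₂ be nonzero finite-dimensional vector spaces over 𝔽₂ = ZMod 2, and let e¹ : ι₁ → V₁ and e² : ι₂ → V₂ be finite families of vectors spanning V₁ and V₂ respectively. Let e : ι₁ ⊕ ι₂ → V₁ × V₂ be the combined family sending i ∈ ι₁ to (e¹_i, 0) and j ∈ ι₂ to (0, e²_j). Then c(e) · (c(e¹) + c(e²)) ≤ c(e¹) · c(e²); equivalently, c(e)⁻¹ ≥ c(e¹)⁻¹ + c(e²)⁻¹. -/

import Mathlib

attribute [local instance] Classical.propDecidable

/-- `mWeight e lam` is the minimum, over nonzero `ZMod 2`-linear functionals `v`,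
of the total `lam`-weight of the indices `i` with `v (e i) ≠ 0`. -/
noncomputable def mWeight {V : Type} [AddCommGroup V] [Module (ZMod 2) V]
    {ι : Type} [Fintype ι] (e : ι → V) (lam : ι → ℝ) : ℝ :=
  sInf {x : ℝ | ∃ v : V →ₗ[ZMod 2] ZMod 2, v ≠ 0 ∧
    x = ∑ i ∈ Finset.univ.filter (fun i => v (e i) ≠ 0), lam i}

/-- The cogirth `c(e)` of a family `e` of vectors over `ZMod 2`: the supremum of
`mWeight e lam` over all probability weightings `lam`. -/
noncomputable def cogirth {V : Type} [AddCommGroup V] [Module (ZMod 2) V]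
    {ι : Type} [Fintype ι] (e : ι → V) : ℝ :=
  sSup {x : ℝ | ∃ lam : ι → ℝ, (∀ i, 0 ≤ lam i) ∧ (∑ i, lam i = 1) ∧ x = mWeight e lam}

section Aux

variable {V : Type} [AddCommGroup V] [Module (ZMod 2) V]
variable {ι : Type} [Fintype ι]

lemma exists_nonzero_functional [FiniteDimensional (ZMod 2) V] [Nontrivial V] :
    ∃ v : V →ₗ[ZMod 2] ZMod 2, v ≠ 0 := by
  obtain ⟨x, hx⟩ := exists_ne (0 : V)
  have h := (Module.forall_dual_apply_eq_zero_iff (ZMod 2) x).not.mpr hx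
  push_neg at h
  obtain ⟨φ, hφ⟩ := h
  exact ⟨φ, fun h0 => hφ (by rw [h0]; rfl)⟩

lemma mWeight_bddBelow (e : ι → V) (lam : ι → ℝ) (h0 : ∀ i, 0 ≤ lam i) :
    (0 : ℝ) ∈ lowerBounds {x : ℝ | ∃ v : V →ₗ[ZMod 2] ZMod 2, v ≠ 0 ∧
      x = ∑ i ∈ Finset.univ.filter (fun i => v (e i) ≠ 0), lam i} := by
  rintro x ⟨v, -, rfl⟩
  exact Finset.sum_nonneg fun i _ => h0 i

lemma mWeight_nonneg (e : ι → V) (lam : ι → ℝ) (h0 : ∀ i, 0 ≤ lam i) :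
    0 ≤ mWeight e lam :=
  Real.sInf_nonneg fun _ hx => mWeight_bddBelow e lam h0 hx

lemma mWeight_le (e : ι → V) (lam : ι → ℝ) (h0 : ∀ i, 0 ≤ lam i)
    {v : V →ₗ[ZMod 2] ZMod 2} (hv : v ≠ 0) :
    mWeight e lam ≤ ∑ i ∈ Finset.univ.filter (fun i => v (e i) ≠ 0), lam i :=
  csInf_le ⟨0, mWeight_bddBelow e lam h0⟩ ⟨v, hv, rfl⟩

lemma mWeight_le_one [FiniteDimensional (ZMod 2) V] [Nontrivial V]
    (e : ι → V) (lam : ι → ℝ) (h0 : ∀ i, 0 ≤ lam i) (h1 : ∑ i, lam i = 1) :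
    mWeight e lam ≤ 1 := by
  obtain ⟨v, hv⟩ := exists_nonzero_functional (V := V)
  refine (mWeight_le e lam h0 hv).trans ?_
  rw [← h1]
  exact Finset.sum_le_sum_of_subset_of_nonneg (Finset.filter_subset _ _)
    (fun i _ _ => h0 i)

lemma cogirth_bddAbove [FiniteDimensional (ZMod 2) V] [Nontrivial V] (e : ι → V) :
    (1 : ℝ) ∈ upperBounds {x : ℝ | ∃ lam : ι → ℝ, (∀ i, 0 ≤ lam i) ∧
      (∑ i, lam i = 1) ∧ x = mWeight e lam} := by
  rintro x ⟨lam, h0, h1, rfl⟩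
  exact mWeight_le_one e lam h0 h1

lemma mWeight_le_cogirth [FiniteDimensional (ZMod 2) V] [Nontrivial V]
    (e : ι → V) (lam : ι → ℝ) (h0 : ∀ i, 0 ≤ lam i) (h1 : ∑ i, lam i = 1) :
    mWeight e lam ≤ cogirth e :=
  le_csSup ⟨1, cogirth_bddAbove e⟩ ⟨lam, h0, h1, rfl⟩

lemma uniform_prob [Nonempty ι] :
    (∀ i : ι, 0 ≤ ((Fintype.card ι : ℝ))⁻¹) ∧
      (∑ _i : ι, ((Fintype.card ι : ℝ))⁻¹ = 1) := by
  constructor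
  · intro i
    positivity
  · rw [Finset.sum_const, Finset.card_univ, nsmul_eq_mul]
    rw [mul_inv_cancel₀]
    have : 0 < Fintype.card ι := Fintype.card_pos
    positivity

lemma cogirth_nonneg [FiniteDimensional (ZMod 2) V] [Nontrivial V] [Nonempty ι]
    (e : ι → V) : 0 ≤ cogirth e := by
  obtain ⟨h0, h1⟩ := uniform_prob (ι := ι)
  exact (mWeight_nonneg e _ h0).trans (mWeight_le_cogirth e _ h0 h1)

end Aux

section Key

variable {V₁ V₂ : Type} [AddCommGroup V₁] [Module (ZMod 2) V₁]
  [AddCommGroup V₂] [Module (ZMod 2) V₂]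
  {ι₁ ι₂ : Type} [Fintype ι₁] [Fintype ι₂]

/-- The weight of a functional coming from the first factor. -/
lemma weight_fst (e₁ : ι₁ → V₁) (e₂ : ι₂ → V₂) (lam : ι₁ ⊕ ι₂ → ℝ)
    (v₁ : V₁ →ₗ[ZMod 2] ZMod 2) :
    ∑ i ∈ Finset.univ.filter (fun i =>
        (v₁.comp (LinearMap.fst (ZMod 2) V₁ V₂))
          ((Sum.elim (fun i => ((e₁ i, 0) : V₁ × V₂))
            (fun j => ((0, e₂ j) : V₁ × V₂))) i) ≠ 0), lam i
      = ∑ i ∈ Finset.univ.filter (fun i => v₁ (e₁ i) ≠ 0), lam (Sum.inl i) := by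
  rw [Finset.sum_filter, Finset.sum_filter, Fintype.sum_sum_type]
  simp
  exact Finset.sum_congr rfl fun x _ => by split_ifs <;> simp_all

lemma weight_snd (e₁ : ι₁ → V₁) (e₂ : ι₂ → V₂) (lam : ι₁ ⊕ ι₂ → ℝ)
    (v₂ : V₂ →ₗ[ZMod 2] ZMod 2) :
    ∑ i ∈ Finset.univ.filter (fun i =>
        (v₂.comp (LinearMap.snd (ZMod 2) V₁ V₂))
          ((Sum.elim (fun i => ((e₁ i, 0) : V₁ × V₂))
            (fun j => ((0, e₂ j) : V₁ × V₂))) i) ≠ 0), lam i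
      = ∑ j ∈ Finset.univ.filter (fun j => v₂ (e₂ j) ≠ 0), lam (Sum.inr j) := by
  rw [Finset.sum_filter, Finset.sum_filter, Fintype.sum_sum_type]
  simp
  exact Finset.sum_congr rfl fun x _ => by split_ifs <;> simp_all

lemma comp_fst_ne_zero {v₁ : V₁ →ₗ[ZMod 2] ZMod 2} (hv : v₁ ≠ 0) :
    v₁.comp (LinearMap.fst (ZMod 2) V₁ V₂) ≠ 0 := by
  intro h
  apply hv
  ext x
  have := LinearMap.congr_fun h (x, 0)
  simpa using this

lemma comp_snd_ne_zero {v₂ : V₂ →ₗ[ZMod 2] ZMod 2} (hv : v₂ ≠ 0) :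
    v₂.comp (LinearMap.snd (ZMod 2) V₁ V₂) ≠ 0 := by
  intro h
  apply hv
  ext x
  have := LinearMap.congr_fun h (0, x)
  simpa using this

lemma key_fst [FiniteDimensional (ZMod 2) V₁] [Nontrivial V₁]
    (e₁ : ι₁ → V₁) (e₂ : ι₂ → V₂) (lam : ι₁ ⊕ ι₂ → ℝ) (h0 : ∀ i, 0 ≤ lam i) :
    mWeight (Sum.elim (fun i => ((e₁ i, 0) : V₁ × V₂))
        (fun j => ((0, e₂ j) : V₁ × V₂))) lam
      ≤ (∑ i, lam (Sum.inl i)) * cogirth e₁ := by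
  obtain ⟨v₀, hv₀⟩ := exists_nonzero_functional (V := V₁)
  set E := Sum.elim (fun i => ((e₁ i, 0) : V₁ × V₂)) (fun j => ((0, e₂ j) : V₁ × V₂))
  set t := ∑ i, lam (Sum.inl i) with ht
  have ht0 : 0 ≤ t := Finset.sum_nonneg fun i _ => h0 _
  rcases eq_or_lt_of_le ht0 with h | h
  · -- t = 0 : each lam (inl i) = 0
    have hsum0 : ∑ i : ι₁, lam (Sum.inl i) = 0 := by rw [← ht, ← h]
    have hzero : ∀ i ∈ Finset.univ, lam (Sum.inl i) = 0 :=
      (Finset.sum_eq_zero_iff_of_nonneg (fun i _ => h0 (Sum.inl i))).mp hsum0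
    have : mWeight E lam ≤ 0 := by
      have hle := mWeight_le E lam h0 (comp_fst_ne_zero (V₂ := V₂) hv₀)
      rw [weight_fst e₁ e₂ lam v₀] at hle
      refine hle.trans ?_
      refine le_of_eq (Finset.sum_eq_zero ?_)
      intro i hi
      exact hzero i (Finset.mem_univ i)
    calc mWeight E lam ≤ 0 := this
      _ = t * cogirth e₁ := by rw [← h, zero_mul]
  · -- t > 0
    set μ : ι₁ → ℝ := fun i => lam (Sum.inl i) / t with hμ
    have hμ0 : ∀ i, 0 ≤ μ i := fun i => div_nonneg (h0 _) ht0
    have hμ1 : ∑ i, μ i = 1 := by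
      rw [hμ]
      rw [← Finset.sum_div, ← ht, div_self h.ne']
    have hc : mWeight e₁ μ ≤ cogirth e₁ := mWeight_le_cogirth e₁ μ hμ0 hμ1
    have hlow : mWeight E lam / t ≤ mWeight e₁ μ := by
      apply le_csInf
      · exact ⟨_, v₀, hv₀, rfl⟩
      · rintro x ⟨v₁, hv₁, rfl⟩
        rw [div_le_iff₀ h]
        have hle := mWeight_le E lam h0 (comp_fst_ne_zero (V₂ := V₂) hv₁)
        rw [weight_fst e₁ e₂ lam v₁] at hle
        refine hle.trans (le_of_eq ?_)
        rw [Finset.sum_mul]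
        refine Finset.sum_congr rfl fun i _ => ?_
        rw [hμ]
        field_simp
    have := mul_le_mul_of_nonneg_left (hlow.trans hc) ht0
    rw [mul_div_cancel₀] at this
    · linarith
    · exact h.ne'

lemma key_snd [FiniteDimensional (ZMod 2) V₂] [Nontrivial V₂]
    (e₁ : ι₁ → V₁) (e₂ : ι₂ → V₂) (lam : ι₁ ⊕ ι₂ → ℝ) (h0 : ∀ i, 0 ≤ lam i) :
    mWeight (Sum.elim (fun i => ((e₁ i, 0) : V₁ × V₂))
        (fun j => ((0, e₂ j) : V₁ × V₂))) lam
      ≤ (∑ j, lam (Sum.inr j)) * cogirth e₂ := by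
  obtain ⟨v₀, hv₀⟩ := exists_nonzero_functional (V := V₂)
  set E := Sum.elim (fun i => ((e₁ i, 0) : V₁ × V₂)) (fun j => ((0, e₂ j) : V₁ × V₂))
  set t := ∑ j, lam (Sum.inr j) with ht
  have ht0 : 0 ≤ t := Finset.sum_nonneg fun i _ => h0 _
  rcases eq_or_lt_of_le ht0 with h | h
  · have hsum0 : ∑ j : ι₂, lam (Sum.inr j) = 0 := by rw [← ht, ← h]
    have hzero : ∀ j ∈ Finset.univ, lam (Sum.inr j) = 0 :=
      (Finset.sum_eq_zero_iff_of_nonneg (fun j _ => h0 (Sum.inr j))).mp hsum0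
    have : mWeight E lam ≤ 0 := by
      have hle := mWeight_le E lam h0 (comp_snd_ne_zero (V₁ := V₁) hv₀)
      rw [weight_snd e₁ e₂ lam v₀] at hle
      refine hle.trans (le_of_eq (Finset.sum_eq_zero fun j hj => hzero j (Finset.mem_univ j)))
    calc mWeight E lam ≤ 0 := this
      _ = t * cogirth e₂ := by rw [← h, zero_mul]
  · set μ : ι₂ → ℝ := fun j => lam (Sum.inr j) / t with hμ
    have hμ0 : ∀ j, 0 ≤ μ j := fun j => div_nonneg (h0 _) ht0
    have hμ1 : ∑ j, μ j = 1 := by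
      rw [hμ]
      rw [← Finset.sum_div, ← ht, div_self h.ne']
    have hc : mWeight e₂ μ ≤ cogirth e₂ := mWeight_le_cogirth e₂ μ hμ0 hμ1
    have hlow : mWeight E lam / t ≤ mWeight e₂ μ := by
      apply le_csInf
      · exact ⟨_, v₀, hv₀, rfl⟩
      · rintro x ⟨v₂, hv₂, rfl⟩
        rw [div_le_iff₀ h]
        have hle := mWeight_le E lam h0 (comp_snd_ne_zero (V₁ := V₁) hv₂)
        rw [weight_snd e₁ e₂ lam v₂] at hle
        refine hle.trans (le_of_eq ?_)
        rw [Finset.sum_mul]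
        refine Finset.sum_congr rfl fun j _ => ?_
        rw [hμ]
        field_simp
    have := mul_le_mul_of_nonneg_left (hlow.trans hc) ht0
    rw [mul_div_cancel₀] at this
    · linarith
    · exact h.ne'

end Key

/-- The `k = 1` case of Lemma 4.6 of the paper: the cogirth of the 1-sum of two spanning
families over `ZMod 2` satisfies `c(e)⁻¹ ≥ c(e¹)⁻¹ + c(e²)⁻¹`, written as
`c(e)·(c(e¹) + c(e²)) ≤ c(e¹)·c(e²)`. -/
theorem one_sum_cogirth_bound {V₁ V₂ : Type} [AddCommGroup V₁] [Module (ZMod 2) V₁]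
    [AddCommGroup V₂] [Module (ZMod 2) V₂]
    [FiniteDimensional (ZMod 2) V₁] [FiniteDimensional (ZMod 2) V₂]
    [Nontrivial V₁] [Nontrivial V₂]
    {ι₁ ι₂ : Type} [Fintype ι₁] [Fintype ι₂]
    (e₁ : ι₁ → V₁) (e₂ : ι₂ → V₂)
    (hspan₁ : Submodule.span (ZMod 2) (Set.range e₁) = ⊤)
    (hspan₂ : Submodule.span (ZMod 2) (Set.range e₂) = ⊤) :
    cogirth (Sum.elim (fun i => ((e₁ i, 0) : V₁ × V₂)) (fun j => ((0, e₂ j) : V₁ × V₂)))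
        * (cogirth e₁ + cogirth e₂) ≤ cogirth e₁ * cogirth e₂ := by
  -- ι₁, ι₂ are nonempty since the spans are everything and the spaces are nontrivial
  have hne₁ : Nonempty ι₁ := by
    by_contra h
    rw [not_nonempty_iff] at h
    have : Set.range e₁ = ∅ := Set.range_eq_empty e₁
    rw [this, Submodule.span_empty] at hspan₁
    exact bot_ne_top (α := Submodule (ZMod 2) V₁) hspan₁
  have hne₂ : Nonempty ι₂ := by
    by_contra h
    rw [not_nonempty_iff] at h
    have : Set.range e₂ = ∅ := Set.range_eq_empty e₂
    rw [this, Submodule.span_empty] at hspan₂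
    exact bot_ne_top (α := Submodule (ZMod 2) V₂) hspan₂
  have hc₁ : 0 ≤ cogirth e₁ := cogirth_nonneg e₁
  have hc₂ : 0 ≤ cogirth e₂ := cogirth_nonneg e₂
  set c₁ := cogirth e₁
  set c₂ := cogirth e₂
  set E := Sum.elim (fun i => ((e₁ i, 0) : V₁ × V₂)) (fun j => ((0, e₂ j) : V₁ × V₂)) with hE
  -- every element of the defining set of `cogirth E` satisfies the bound
  have key : ∀ x ∈ {x : ℝ | ∃ lam : ι₁ ⊕ ι₂ → ℝ, (∀ i, 0 ≤ lam i) ∧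
      (∑ i, lam i = 1) ∧ x = mWeight E lam}, x * (c₁ + c₂) ≤ c₁ * c₂ := by
    rintro x ⟨lam, h0, h1, rfl⟩
    have hts : (∑ i, lam (Sum.inl i)) + (∑ j, lam (Sum.inr j)) = 1 := by
      rw [← h1, Fintype.sum_sum_type]
    have hk1 := key_fst e₁ e₂ lam h0
    have hk2 := key_snd e₁ e₂ lam h0
    rw [← hE] at hk1 hk2
    have h1' : mWeight E lam * c₁ ≤ (∑ j, lam (Sum.inr j)) * c₂ * c₁ :=
      mul_le_mul_of_nonneg_right hk2 hc₁
    have h2' : mWeight E lam * c₂ ≤ (∑ i, lam (Sum.inl i)) * c₁ * c₂ :=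
      mul_le_mul_of_nonneg_right hk1 hc₂
    have heq : (∑ j, lam (Sum.inr j)) * c₂ * c₁ + (∑ i, lam (Sum.inl i)) * c₁ * c₂
        = ((∑ i, lam (Sum.inl i)) + (∑ j, lam (Sum.inr j))) * (c₁ * c₂) := by ring
    rw [hts, one_mul] at heq
    linarith [h1', h2', heq, mul_add (mWeight E lam) c₁ c₂]
  rcases eq_or_lt_of_le (add_nonneg hc₁ hc₂) with h | h
  · -- c₁ + c₂ = 0
    have h1 : c₁ = 0 := by linarith
    have h2 : c₂ = 0 := by linarith
    rw [← h, mul_zero, h1, h2, mul_zero]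
  · have hsup : cogirth E ≤ c₁ * c₂ / (c₁ + c₂) := by
      apply Real.sSup_le
      · intro x hx
        rw [le_div_iff₀ h]
        exact key x hx
      · positivity
    calc cogirth E * (c₁ + c₂) ≤ (c₁ * c₂ / (c₁ + c₂)) * (c₁ + c₂) :=
          mul_le_mul_of_nonneg_right hsup (le_of_lt h)
      _ = c₁ * c₂ := by field_simp
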